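/- Let (H, H⁺) be an unperforated partially ordered abelian group and let N ⊆ H be an additive submonoid with N ∩ (−N) = {0} and N ∩ H⁺ = {0}. Suppose x, y ∈ H \ {0}, integers k, m ≥ 1, and a, b ∈ N satisfy a + k·x ∈ H⁺ and b + m·y ∈ H⁺. Then x + y ≠ 0 and (m·a + k·b) + m·k·(x + y) ∈ H⁺. -/
import Mathlib



lemma aux_nsmul_mem {H : Type*} [AddCommGroup H] (S : Set H)
    (hS : ∀ u ∈ S, ∀ v ∈ S, u + v ∈ S)
    (p : H) (hp : p ∈ S) : ∀ j : ℕ, (j + 1) • p ∈ S := by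
  intro j
  induction j with
  | zero => simpa using hp
  | succ j ih =>
    rw [succ_nsmul]
    exact hS _ ih _ hp

lemma aux_smul_mem {H : Type*} [AddCommGroup H] (S : Set H)
    (hS : ∀ u ∈ S, ∀ v ∈ S, u + v ∈ S)
    (n : ℤ) (hn : 1 ≤ n) (p : H) (hp : p ∈ S) : n • p ∈ S := by
  have h : n • p = ((n.toNat - 1) + 1) • p := by
    rw [← natCast_zsmul]
    congr 1
    omega
  rw [h]
  exact aux_nsmul_mem S hS p hp _

/-- Claim 4 in Proposition 5.5: additivity of positivity for the sign
function on an unperforated partially ordered abelian group. -/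
theorem stmt_12 {H : Type*} [AddCommGroup H]
    (Hpos : Set H)
    (hzero : (0 : H) ∈ Hpos)
    (hadd : ∀ a ∈ Hpos, ∀ b ∈ Hpos, a + b ∈ Hpos)
    (hpointed : ∀ a : H, a ∈ Hpos → -a ∈ Hpos → a = 0)
    (hunperf : ∀ n : ℤ, 1 ≤ n → ∀ x : H, n • x ∈ Hpos → x ∈ Hpos)
    (N : Set H)
    (hN0 : (0 : H) ∈ N)
    (hNadd : ∀ a ∈ N, ∀ b ∈ N, a + b ∈ N)
    (hNN : ∀ a ∈ N, -a ∈ N → a = 0)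
    (hNpos : ∀ a ∈ N, a ∈ Hpos → a = 0)
    (x y : H) (hx : x ≠ 0) (hy : y ≠ 0)
    (k m : ℤ) (hk : 1 ≤ k) (hm : 1 ≤ m)
    (a b : H) (ha : a ∈ N) (hb : b ∈ N)
    (hax : a + k • x ∈ Hpos) (hby : b + m • y ∈ Hpos) :
    x + y ≠ 0 ∧ (m • a + k • b) + (m * k) • (x + y) ∈ Hpos := by
  have key : ∀ (S : Set H), (∀ u ∈ S, ∀ v ∈ S, u + v ∈ S) →
      ∀ n : ℤ, 1 ≤ n → ∀ p ∈ S, n • p ∈ S :=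
    fun S hS n hn p hp => aux_smul_mem S hS n hn p hp
  have h1 : m • (a + k • x) ∈ Hpos := key Hpos hadd m hm _ hax
  have h2 : k • (b + m • y) ∈ Hpos := key Hpos hadd k hk _ hby
  have heq : m • (a + k • x) + k • (b + m • y)
      = (m • a + k • b) + (m * k) • (x + y) := by
    rw [smul_add, smul_add, smul_add, smul_smul, smul_smul, mul_comm k m]
    abel
  have h3 : (m • a + k • b) + (m * k) • (x + y) ∈ Hpos := by
    rw [← heq]; exact hadd _ h1 _ h2
  refine ⟨?_, h3⟩
  intro hxy
  have hsum0 : (m • a + k • b) ∈ Hpos := by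
    have := h3
    rwa [hxy, smul_zero, add_zero] at this
  have hma : m • a ∈ N := key N hNadd m hm _ ha
  have hkb : k • b ∈ N := key N hNadd k hk _ hb
  have hsumN : m • a + k • b ∈ N := hNadd _ hma _ hkb
  have hsz : m • a + k • b = 0 := hNpos _ hsumN hsum0
  have hmz : m • a = 0 := by
    apply hNN _ hma
    have : -(m • a) = k • b := neg_eq_of_add_eq_zero_right hsz
    rw [this]; exact hkb
  have hkz : k • b = 0 := by
    have := hsz; rw [hmz, zero_add] at this; exact this
  have ha0 : a = 0 := by
    apply hNpos _ ha
    apply hunperf m hm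
    rw [hmz]; exact hzero
  have hb0 : b = 0 := by
    apply hNpos _ hb
    apply hunperf k hk
    rw [hkz]; exact hzero
  have hxp : x ∈ Hpos := by
    apply hunperf k hk
    rwa [ha0, zero_add] at hax
  have hyp : y ∈ Hpos := by
    apply hunperf m hm
    rwa [hb0, zero_add] at hby
  have : -x ∈ Hpos := by
    have : y = -x := eq_neg_of_add_eq_zero_right hxy
    rwa [this] at hyp
  exact hx (hpointed x hxp this)
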